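/- For a semicopula S, the inequality I_S(μ, (f+a)·1_A) ≤ I_S(μ, f·1_A) + I_S(μ, a·1_A) holds for all a, A, μ, f (with f + a ∈ [0,1]) if and only if S(x+y, z) ≤ S(x, z) + S(y, z) for all x, y, z ∈ [0,1] with x + y ≤ 1. -/
import Mathlib

open Set

def Semicopula (S : ℝ → ℝ → ℝ) : Prop :=
  (∀ x ∈ Icc (0:ℝ) 1, ∀ y ∈ Icc (0:ℝ) 1, S x y ∈ Icc (0:ℝ) 1) ∧
  (∀ x ∈ Icc (0:ℝ) 1, ∀ y ∈ Icc (0:ℝ) 1, ∀ y' ∈ Icc (0:ℝ) 1, y ≤ y' → S x y ≤ S x y') ∧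
  (∀ y ∈ Icc (0:ℝ) 1, ∀ x ∈ Icc (0:ℝ) 1, ∀ x' ∈ Icc (0:ℝ) 1, x ≤ x' → S x y ≤ S x' y) ∧
  (∀ x ∈ Icc (0:ℝ) 1, S x 1 = x ∧ S 1 x = x)

def Capacity {X : Type} (μ : Set X → ℝ) : Prop :=
  (∀ A : Set X, μ A ∈ Icc (0:ℝ) 1) ∧ (∀ A B : Set X, A ⊆ B → μ A ≤ μ B) ∧
  μ (∅ : Set X) = 0 ∧ μ (univ : Set X) = 1

noncomputable def genInt {X : Type} (S : ℝ → ℝ → ℝ) (μ : Set X → ℝ) (f : X → ℝ) : ℝ :=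
  ⨆ t : Icc (0:ℝ) 1, S (t:ℝ) (μ {x | (t:ℝ) ≤ f x})

def Comonotone {X : Type} (f g : X → ℝ) : Prop :=
  ∀ x y, 0 ≤ (f x - f y) * (g x - g y)

def Tcoseminorm (op : ℝ → ℝ → ℝ) : Prop :=
  ∃ S : ℝ → ℝ → ℝ, Semicopula S ∧
    ∀ x ∈ Icc (0:ℝ) 1, ∀ y ∈ Icc (0:ℝ) 1, op x y = 1 - S (1 - x) (1 - y)


lemma sc_zero_left {S : ℝ → ℝ → ℝ} (hS : Semicopula S) {z : ℝ} (hz : z ∈ Icc (0:ℝ) 1) :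
    S 0 z = 0 := by
  have h0 : (0:ℝ) ∈ Icc (0:ℝ) 1 := by norm_num
  have h1 : (1:ℝ) ∈ Icc (0:ℝ) 1 := by norm_num
  have hle : S 0 z ≤ S 0 1 := hS.2.1 0 h0 z hz 1 h1 hz.2
  have he : S 0 1 = 0 := (hS.2.2.2 0 h0).1
  have hge : 0 ≤ S 0 z := (hS.1 0 h0 z hz).1
  linarith

lemma sc_zero_right {S : ℝ → ℝ → ℝ} (hS : Semicopula S) {t : ℝ} (ht : t ∈ Icc (0:ℝ) 1) :
    S t 0 = 0 := by
  have h0 : (0:ℝ) ∈ Icc (0:ℝ) 1 := by norm_num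
  have h1 : (1:ℝ) ∈ Icc (0:ℝ) 1 := by norm_num
  have hle : S t 0 ≤ S 1 0 := hS.2.2.1 0 h0 t ht 1 h1 ht.2
  have he : S 1 0 = 0 := (hS.2.2.2 0 h0).2
  have hge : 0 ≤ S t 0 := (hS.1 t ht 0 h0).1
  linarith

lemma genInt_bdd {X : Type} {S : ℝ → ℝ → ℝ} (hS : Semicopula S) {μ : Set X → ℝ}
    (hμ : Capacity μ) (f : X → ℝ) :
    BddAbove (Set.range fun t : Icc (0:ℝ) 1 => S (t:ℝ) (μ {x | (t:ℝ) ≤ f x})) := by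
  refine ⟨1, ?_⟩
  rintro _ ⟨t, rfl⟩
  exact (hS.1 t t.2 _ (hμ.1 _)).2

lemma le_genInt {X : Type} {S : ℝ → ℝ → ℝ} (hS : Semicopula S) {μ : Set X → ℝ}
    (hμ : Capacity μ) (f : X → ℝ) (t : Icc (0:ℝ) 1) :
    S (t:ℝ) (μ {x | (t:ℝ) ≤ f x}) ≤ genInt S μ f :=
  le_ciSup (genInt_bdd hS hμ f) t

lemma genInt_nonneg {X : Type} {S : ℝ → ℝ → ℝ} (hS : Semicopula S) {μ : Set X → ℝ}
    (hμ : Capacity μ) (f : X → ℝ) : 0 ≤ genInt S μ f := by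
  have t0 : Icc (0:ℝ) 1 := ⟨0, by norm_num⟩
  refine le_trans ?_ (le_genInt hS hμ f ⟨0, by norm_num⟩)
  exact (hS.1 0 (by norm_num) _ (hμ.1 _)).1

open Classical in
noncomputable def boolμ (z : ℝ) : Set Bool → ℝ := fun B =>
  if true ∈ B then (if false ∈ B then 1 else z) else 0

lemma boolμ_capacity {z : ℝ} (hz : z ∈ Icc (0:ℝ) 1) : Capacity (boolμ z) := by
  classical
  refine ⟨?_, ?_, ?_, ?_⟩
  · intro A
    unfold boolμ
    split_ifs <;> constructor <;> linarith [hz.1, hz.2]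
  · intro A B hAB
    unfold boolμ
    by_cases h1 : true ∈ A <;> by_cases h2 : false ∈ A
    · simp [h1, h2, hAB h1, hAB h2]
    · have := hAB h1
      simp only [h1, h2, this, if_true, if_false]
      split_ifs <;> linarith [hz.1, hz.2]
    · simp only [h1, if_false]
      split_ifs <;> linarith [hz.1, hz.2]
    · simp only [h1, if_false]
      split_ifs <;> linarith [hz.1, hz.2]
  · simp [boolμ]
  · simp [boolμ]

lemma genInt_boolμ {S : ℝ → ℝ → ℝ} (hS : Semicopula S) {z c : ℝ}
    (hz : z ∈ Icc (0:ℝ) 1) (hc : c ∈ Icc (0:ℝ) 1) :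
    genInt S (boolμ z) (({true} : Set Bool).indicator fun _ => c) = S c z := by
  classical
  haveI : Nonempty (Icc (0:ℝ) 1) := ⟨⟨0, by norm_num⟩⟩
  have hcap := boolμ_capacity hz
  have hmem : ∀ (t : ℝ) (b : Bool),
      (t ≤ ({true} : Set Bool).indicator (fun _ => c) b) ↔ (if b = true then t ≤ c else t ≤ 0) := by
    intro t b
    cases b <;> simp [Set.indicator_apply]
  have hval : ∀ t : ℝ, 0 < t →
      boolμ z {x : Bool | t ≤ ({true} : Set Bool).indicator (fun _ => c) x}
        = if t ≤ c then z else 0 := by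
    intro t ht
    unfold boolμ
    have htr : (true ∈ {x : Bool | t ≤ ({true} : Set Bool).indicator (fun _ => c) x}) ↔ t ≤ c := by
      simp [Set.mem_setOf_eq, hmem]
    have hfa : (false ∈ {x : Bool | t ≤ ({true} : Set Bool).indicator (fun _ => c) x}) ↔ t ≤ 0 := by
      simp [Set.mem_setOf_eq, hmem]
    by_cases h1 : t ≤ c
    · rw [if_pos (htr.mpr h1), if_neg (fun hcon => absurd (hfa.mp hcon) (by linarith)), if_pos h1]
    · rw [if_neg (fun hcon => h1 (htr.mp hcon)), if_neg h1]
  apply le_antisymm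
  · apply ciSup_le
    intro t
    rcases eq_or_lt_of_le t.2.1 with h0 | h0
    · rw [← h0, sc_zero_left hS (hcap.1 _)]
      exact (hS.1 c hc z hz).1
    · rw [hval t h0]
      by_cases h1 : (t:ℝ) ≤ c
      · rw [if_pos h1]
        exact hS.2.2.1 z hz t t.2 c hc h1
      · rw [if_neg h1, sc_zero_right hS t.2]
        exact (hS.1 c hc z hz).1
  · rcases eq_or_lt_of_le hc.1 with h0 | h0
    · rw [← h0, sc_zero_left hS hz]
      exact genInt_nonneg hS hcap _
    · have := le_genInt hS hcap (({true} : Set Bool).indicator fun _ => c) ⟨c, hc⟩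
      rwa [hval c h0, if_pos le_rfl] at this

theorem stmt3 (S : ℝ → ℝ → ℝ) (hS : Semicopula S) :
    (∀ (X : Type) (μ : Set X → ℝ), Capacity μ → ∀ (A : Set X) (f : X → ℝ),
        (∀ x, f x ∈ Icc (0:ℝ) 1) → ∀ a ∈ Icc (0:ℝ) 1,
        (∀ x, f x + a ∈ Icc (0:ℝ) 1) →
        genInt S μ (A.indicator (fun x => f x + a)) ≤
          genInt S μ (A.indicator f) + genInt S μ (A.indicator (fun _ => a))) ↔
    (∀ x ∈ Icc (0:ℝ) 1, ∀ y ∈ Icc (0:ℝ) 1, ∀ z ∈ Icc (0:ℝ) 1, x + y ≤ 1 →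
        S (x + y) z ≤ S x z + S y z) := by
  constructor
  · intro h x hx y hy z hz hxy
    have hxy' : x + y ∈ Icc (0:ℝ) 1 := ⟨add_nonneg hx.1 hy.1, hxy⟩
    have h1 := h Bool (boolμ z) (boolμ_capacity hz) {true} (fun _ => x) (fun _ => hx) y hy
      (fun _ => hxy')
    have e1 : ({true} : Set Bool).indicator (fun b => (fun _ : Bool => x) b + y)
        = ({true} : Set Bool).indicator (fun _ => x + y) := rfl
    rw [e1, genInt_boolμ hS hz hxy', genInt_boolμ hS hz hx, genInt_boolμ hS hz hy] at h1
    exact h1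
  · intro hsub X μ hμ A f hf a ha hfa
    haveI : Nonempty (Icc (0:ℝ) 1) := ⟨⟨0, by norm_num⟩⟩
    conv_lhs => rw [genInt]
    apply ciSup_le
    intro t
    set E := {x | (t:ℝ) ≤ A.indicator (fun x => f x + a) x} with hE
    have hg1 : 0 ≤ genInt S μ (A.indicator f) := genInt_nonneg hS hμ _
    have hg2 : 0 ≤ genInt S μ (A.indicator fun _ => a) := genInt_nonneg hS hμ _
    rcases eq_or_lt_of_le t.2.1 with h0 | h0
    · rw [← h0, sc_zero_left hS (hμ.1 _)]
      have := le_genInt hS hμ (A.indicator f)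
      calc (0:ℝ) ≤ genInt S μ (A.indicator f) := hg1
        _ ≤ _ := by linarith
    · have hEA : ∀ x ∈ E, x ∈ A := by
        intro x hx
        by_contra hxA
        have : A.indicator (fun x => f x + a) x = 0 := Set.indicator_of_notMem hxA _
        rw [hE] at hx
        simp only [Set.mem_setOf_eq, this] at hx
        linarith
      by_cases hta : (t:ℝ) ≤ a
      · -- E ⊆ {x | t ≤ indicator A (const a) x}
        have hsubs : E ⊆ {x | (t:ℝ) ≤ A.indicator (fun _ => a) x} := by
          intro x hx
          have hxA := hEA x hx
          simp only [Set.mem_setOf_eq, Set.indicator_of_mem hxA]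
          exact hta
        have hmono : S (t:ℝ) (μ E) ≤ S (t:ℝ) (μ {x | (t:ℝ) ≤ A.indicator (fun _ => a) x}) :=
          hS.2.1 (t:ℝ) t.2 _ (hμ.1 _) _ (hμ.1 _) (hμ.2.1 _ _ hsubs)
        have := le_genInt hS hμ (A.indicator fun _ => a) t
        calc S (t:ℝ) (μ E) ≤ S (t:ℝ) (μ {x | (t:ℝ) ≤ A.indicator (fun _ => a) x}) := hmono
          _ ≤ genInt S μ (A.indicator fun _ => a) := this
          _ ≤ _ := by linarith
      · push_neg at hta
        set u : ℝ := (t:ℝ) - a with hu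
        have hu1 : u ∈ Icc (0:ℝ) 1 := ⟨by simp [hu]; linarith, by
          have := t.2.2; have := ha.1; simp [hu]; linarith⟩
        have key := hsub u hu1 a ha (μ E) (hμ.1 E) (by have := t.2.2; simp [hu]; linarith)
        have hta' : u + a = (t:ℝ) := by simp [hu]
        rw [hta'] at key
        have h1 : S u (μ E) ≤ genInt S μ (A.indicator f) := by
          have hsubs : E ⊆ {x | u ≤ A.indicator f x} := by
            intro x hx
            have hxA := hEA x hx
            have hx' : (t:ℝ) ≤ f x + a := by
              rw [hE] at hx
              simpa [Set.indicator_of_mem hxA] using hx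
            simp only [Set.mem_setOf_eq, Set.indicator_of_mem hxA]
            simp [hu]; linarith
          have hmono : S u (μ E) ≤ S u (μ {x | u ≤ A.indicator f x}) :=
            hS.2.1 u hu1 _ (hμ.1 _) _ (hμ.1 _) (hμ.2.1 _ _ hsubs)
          exact le_trans hmono (le_genInt hS hμ (A.indicator f) ⟨u, hu1⟩)
        have h2 : S a (μ E) ≤ genInt S μ (A.indicator fun _ => a) := by
          rcases eq_or_lt_of_le ha.1 with ha0 | ha0
          · have hz0 : S a (μ E) = 0 := by rw [← ha0]; exact sc_zero_left hS (hμ.1 _)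
            rw [hz0]; exact hg2
          · have hsubs : E ⊆ {x | a ≤ A.indicator (fun _ => a) x} := by
              intro x hx
              have hxA := hEA x hx
              simp [Set.mem_setOf_eq, Set.indicator_of_mem hxA]
            have hmono : S a (μ E) ≤ S a (μ {x | a ≤ A.indicator (fun _ => a) x}) :=
              hS.2.1 a ha _ (hμ.1 _) _ (hμ.1 _) (hμ.2.1 _ _ hsubs)
            exact le_trans hmono (le_genInt hS hμ (A.indicator fun _ => a) ⟨a, ha⟩)
        linarith
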